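/- Let A = (A_T, A_N, ι, A_0) be a constraint k-algebra, f a constraint m-cochain and g a constraint n-cochain on A. Then: (1) the pair f∪g = (f_T∪g_T, f_N∪g_N) is a constraint (m+n)-cochain; (2) if f or g lies in the 0-component, then f∪g lies in the 0-component; (3) the Hochschild differential is a graded derivation of the cup product: δ(f∪g) = (δf)∪g + (−1)^m f∪(δg), in both the T- and the N-component. -/

import Mathlib

universe u v w

/-- A constraint `k`-algebra: two associative `k`-algebras `A_T` and `A_N`,
a `k`-algebra homomorphism `ι : A_N → A_T`, and a two-sided ideal `A_0 ⊆ A_N`. -/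
structure ConstraintAlgebra (k : Type u) [CommRing k] (AT : Type v) (AN : Type w)
    [Ring AT] [Ring AN] [Algebra k AT] [Algebra k AN] where
  iota : AN →ₐ[k] AT
  zero : Submodule k AN
  mul_mem_zero : ∀ x a : AN, a ∈ zero → x * a ∈ zero
  mem_zero_mul : ∀ x a : AN, a ∈ zero → a * x ∈ zero

/-- `k`-multilinearity of a map `(Fin n → M) → M`. -/
def IsMultilinearFn (k : Type u) {M : Type v} [CommRing k] [AddCommGroup M] [Module k M]
    {n : ℕ} (f : (Fin n → M) → M) : Prop :=
  (∀ (v : Fin n → M) (i : Fin n) (x y : M),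
      f (Function.update v i (x + y)) = f (Function.update v i x) + f (Function.update v i y)) ∧
  ∀ (v : Fin n → M) (i : Fin n) (c : k) (x : M),
      f (Function.update v i (c • x)) = c • f (Function.update v i x)

/-- The Hochschild differential of an `n`-multilinear map, with respect to a
multiplication `mul`. -/
def hochschildDiffM {M : Type v} [AddCommGroup M] (mul : M → M → M) {n : ℕ}
    (φ : (Fin n → M) → M) : (Fin (n + 1) → M) → M := fun a =>
  mul (a 0) (φ fun j => a j.succ)
    + (∑ i : Fin n, ((-1 : ℤ) ^ (i.val + 1)) •
        φ fun j => if j.val < i.val then a j.castSucc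
          else if j.val = i.val then mul (a j.castSucc) (a j.succ)
          else a j.succ)
    + ((-1 : ℤ) ^ (n + 1)) • mul (φ fun j => a j.castSucc) (a (Fin.last n))

/-- The cup product `(φ∪ψ)(a_1,…,a_{m+n}) = φ(a_1,…,a_m)·ψ(a_{m+1},…,a_{m+n})`. -/
def cup {M : Type v} [Mul M] {m n : ℕ}
    (φ : (Fin m → M) → M) (ψ : (Fin n → M) → M) : (Fin (m + n) → M) → M := fun a =>
  (φ fun i => a ⟨i.val, by have hi := i.isLt; omega⟩) *
    ψ fun j => a ⟨m + j.val, by have hj := j.isLt; omega⟩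

variable {k : Type u} [CommRing k] {AT : Type v} {AN : Type w}
  [Ring AT] [Ring AN] [Algebra k AT] [Algebra k AN]

/-- A constraint `n`-cochain on a constraint algebra. -/
def IsConstraintCochain (A : ConstraintAlgebra k AT AN) {n : ℕ}
    (fT : (Fin n → AT) → AT) (fN : (Fin n → AN) → AN) : Prop :=
  IsMultilinearFn k fT ∧ IsMultilinearFn k fN ∧
    (∀ a : Fin n → AN, A.iota (fN a) = fT fun i => A.iota (a i)) ∧
    ∀ a : Fin n → AN, (∃ i, a i ∈ A.zero) → fN a ∈ A.zero


section Helpers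

lemma upd_in {M : Type*} {p q : ℕ} (v : Fin p → M) (i : Fin p) (z : M) (e : Fin q → Fin p)
    (t0 : Fin q) (he : ∀ t, e t = i ↔ t = t0) :
    (fun t => Function.update v i z (e t)) = Function.update (fun t => v (e t)) t0 z := by
  funext t
  rw [Function.update_apply, Function.update_apply]
  by_cases h : t = t0
  · rw [if_pos ((he t).2 h), if_pos h]
  · rw [if_neg (fun hh => h ((he t).1 hh)), if_neg h]

lemma upd_out {M : Type*} {p q : ℕ} (v : Fin p → M) (i : Fin p) (z : M) (e : Fin q → Fin p)
    (he : ∀ t, e t ≠ i) :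
    (fun t => Function.update v i z (e t)) = fun t => v (e t) := by
  funext t; rw [Function.update_apply, if_neg (he t)]

lemma cup_multilinear {k : Type u} [CommRing k] {M : Type*} [Ring M] [Algebra k M] {m n : ℕ}
    (φ : (Fin m → M) → M) (ψ : (Fin n → M) → M)
    (hφ : IsMultilinearFn k φ) (hψ : IsMultilinearFn k ψ) :
    IsMultilinearFn k (cup φ ψ) := by
  have key1 : ∀ (v : Fin (m + n) → M) (i : Fin (m + n)) (h : i.1 < m) (z : M),
      cup φ ψ (Function.update v i z)
        = φ (Function.update (fun i' : Fin m => v ⟨i'.1, by have := i'.isLt; omega⟩) ⟨i.1, h⟩ z)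
          * ψ (fun j : Fin n => v ⟨m + j.1, by have := j.isLt; omega⟩) := by
    intro v i h z
    show (φ fun i' => Function.update v i z _) * (ψ fun j => Function.update v i z _) = _
    rw [upd_in v i z _ ⟨i.1, h⟩ (fun t => by simp [Fin.ext_iff]),
        upd_out v i z _ (fun t => by have := t.isLt; simp only [ne_eq, Fin.ext_iff]; omega)]
  have key2 : ∀ (v : Fin (m + n) → M) (i : Fin (m + n)) (h : m ≤ i.1) (z : M),
      cup φ ψ (Function.update v i z)
        = φ (fun i' : Fin m => v ⟨i'.1, by have := i'.isLt; omega⟩)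
          * ψ (Function.update (fun j : Fin n => v ⟨m + j.1, by have := j.isLt; omega⟩)
                ⟨i.1 - m, by have := i.isLt; omega⟩ z) := by
    intro v i h z
    show (φ fun i' => Function.update v i z _) * (ψ fun j => Function.update v i z _) = _
    rw [upd_out v i z (fun i' : Fin m => ⟨i'.1, by have := i'.isLt; omega⟩)
          (fun t => by have := t.isLt; simp only [ne_eq, Fin.ext_iff]; omega),
        upd_in v i z _ ⟨i.1 - m, by have := i.isLt; omega⟩
          (fun t => by have := t.isLt; simp only [Fin.ext_iff]; omega)]
  constructor
  · intro v i x y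
    by_cases h : i.1 < m
    · rw [key1 v i h (x + y), key1 v i h x, key1 v i h y, hφ.1, add_mul]
    · rw [key2 v i (by omega) (x + y), key2 v i (by omega) x, key2 v i (by omega) y,
        hψ.1, mul_add]
  · intro v i c x
    by_cases h : i.1 < m
    · rw [key1 v i h (c • x), key1 v i h x, hφ.2, smul_mul_assoc]
    · rw [key2 v i (by omega) (c • x), key2 v i (by omega) x, hψ.2, mul_smul_comm]

lemma hochschild_cup {M : Type*} [Ring M] {m n : ℕ}
    (φ : (Fin m → M) → M) (ψ : (Fin n → M) → M) (a : Fin (m + n + 1) → M) :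
    hochschildDiffM (· * ·) (cup φ ψ) a
      = cup (hochschildDiffM (· * ·) φ) ψ (fun i => a (Fin.cast (by omega) i))
        + ((-1 : ℤ) ^ m) • cup φ (hochschildDiffM (· * ·) ψ)
            (fun i => a (Fin.cast (by omega) i)) := by
  obtain ⟨A, hA⟩ : ∃ A : ℕ → M, ∀ x : Fin (m + n + 1), a x = A x.1 :=
    ⟨fun t => if h : t < m + n + 1 then a ⟨t, h⟩ else 0, fun x => by simp [x.isLt]⟩
  simp only [hochschildDiffM, cup, hA, Fin.val_succ, Fin.coe_castSucc, Fin.val_last,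
    Fin.val_zero, Fin.coe_castAdd, Fin.coe_natAdd, Fin.val_mk, Fin.val_cast]
  rw [Fin.sum_univ_add]
  have hidx : ∀ j : ℕ, m + 1 + j = m + j + 1 := fun j => by omega
  have hs : ∀ x : ℕ, ((-1:ℤ))^m * (-1)^(x+1) = (-1)^(m+x+1) := fun x => by
    rw [← pow_add, Nat.add_assoc]
  have hneg : ((-1:ℤ))^(m+1) = -(-1)^m := by ring
  have hc1 : ∀ (x : Fin m) (j : ℕ), (m + j < (x:ℕ)) = False := fun x j => by
    simp only [eq_iff_iff, iff_false]; have := x.isLt; omega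
  have hc2 : ∀ (x : Fin m) (j : ℕ), (m + j = (x:ℕ)) = False := fun x j => by
    simp only [eq_iff_iff, iff_false]; have := x.isLt; omega
  have hc3 : ∀ (x : Fin n) (i : Fin m), ((i:ℕ) < m + (x:ℕ)) = True := fun x i => by
    simp only [eq_iff_iff, iff_true]; have := i.isLt; omega
  simp only [Fin.coe_castAdd, Fin.coe_natAdd, add_mul, mul_add, Finset.sum_mul,
    Finset.mul_sum, Finset.smul_sum, smul_mul_assoc, mul_smul_comm, smul_add, smul_smul,
    mul_assoc, Nat.add_zero, hidx, hs, Nat.add_lt_add_iff_left, Nat.add_left_cancel_iff,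
    ← Nat.add_assoc, hneg, neg_smul, neg_mul, hc1, hc2, hc3, if_true, if_false]
  abel

end Helpers

/-- The cup product of constraint cochains is a constraint cochain,
it preserves the `0`-component, and the Hochschild differential is a graded derivation
of the cup product: `δ(f∪g) = (δf)∪g + (−1)^m f∪(δg)` in both components. -/
theorem cup_product_constraint (A : ConstraintAlgebra k AT AN) {m n : ℕ}
    (fT : (Fin m → AT) → AT) (fN : (Fin m → AN) → AN)
    (gT : (Fin n → AT) → AT) (gN : (Fin n → AN) → AN)
    (hf : IsConstraintCochain A fT fN) (hg : IsConstraintCochain A gT gN) :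
    IsConstraintCochain A (cup fT gT) (cup fN gN) ∧
    (((∀ a : Fin m → AN, fN a ∈ A.zero) ∨ (∀ a : Fin n → AN, gN a ∈ A.zero)) →
      ∀ a : Fin (m + n) → AN, cup fN gN a ∈ A.zero) ∧
    (∀ a : Fin (m + n + 1) → AT,
      hochschildDiffM (· * ·) (cup fT gT) a
        = cup (hochschildDiffM (· * ·) fT) gT
            (fun i => a ⟨i.val, by have hi := i.isLt; omega⟩)
          + ((-1 : ℤ) ^ m) • cup fT (hochschildDiffM (· * ·) gT)
              (fun i => a ⟨i.val, by have hi := i.isLt; omega⟩)) ∧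
    (∀ a : Fin (m + n + 1) → AN,
      hochschildDiffM (· * ·) (cup fN gN) a
        = cup (hochschildDiffM (· * ·) fN) gN
            (fun i => a ⟨i.val, by have hi := i.isLt; omega⟩)
          + ((-1 : ℤ) ^ m) • cup fN (hochschildDiffM (· * ·) gN)
              (fun i => a ⟨i.val, by have hi := i.isLt; omega⟩)) := by
  refine ⟨⟨cup_multilinear _ _ hf.1 hg.1, cup_multilinear _ _ hf.2.1 hg.2.1, ?_, ?_⟩,
    ?_, fun a => hochschild_cup fT gT a, fun a => hochschild_cup fN gN a⟩
  · intro a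
    show A.iota (fN _ * gN _) = (fT fun i' => _) * gT fun j' => _
    rw [map_mul, hf.2.2.1, hg.2.2.1]
  · rintro a ⟨i, hi⟩
    show fN _ * gN _ ∈ A.zero
    by_cases h : i.1 < m
    · exact A.mem_zero_mul _ _ (hf.2.2.2 _ ⟨⟨i.1, h⟩, hi⟩)
    · refine A.mul_mem_zero _ _ (hg.2.2.2 _ ⟨⟨i.1 - m, by have := i.isLt; omega⟩, ?_⟩)
      have e : (⟨m + (i.1 - m), by have := i.isLt; omega⟩ : Fin (m + n)) = i :=
        Fin.ext (by simp; omega)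
      show a ⟨m + (i.1 - m), _⟩ ∈ A.zero
      rw [e]; exact hi
  · rintro (hl | hr) a
    · exact A.mem_zero_mul _ _ (hl _)
    · exact A.mul_mem_zero _ _ (hr _)
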